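/- arXiv:1609.01254 — 2 statements merged into one kernel-verified Lean document; each statement's English description precedes it below -/
import Mathlib

section
/- Let σ be a positive definite density matrix in M_n(ℂ), and let s ∈ [0,1] with s ≠ 1/2. Let K : M_n(ℂ) → M_n(ℂ) be a linear map that preserves self-adjointness (K(A*) = (K(A))* for all A) and is self-adjoint with respect to the inner product ⟨A,B⟩_s = Tr[σ^s A* σ^{1-s} B]. Then K commutes with the modular operator Δ_σ(A) = σAσ⁻¹. -/
open Matrix
open scoped ComplexOrder

variable {n : ℕ}

lemma tr_helper (d e : Fin n → ℂ) (X B : Matrix (Fin n) (Fin n) ℂ) :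
    (diagonal d * Xᴴ * (diagonal e * B)).trace
      = ∑ a, ∑ b, d a * (starRingEnd ℂ) (X b a) * (e b * B b a) := by
  simp [Matrix.trace, Matrix.mul_apply, Matrix.diagonal_apply, Matrix.conjTranspose_apply,
    Finset.mul_sum, Finset.sum_mul]

lemma tr_std_right (d e : Fin n → ℂ) (X : Matrix (Fin n) (Fin n) ℂ) (k l : Fin n) :
    (diagonal d * Xᴴ * (diagonal e * Matrix.single k l (1:ℂ))).trace
      = d l * e k * (starRingEnd ℂ) (X k l) := by
  rw [tr_helper]
  simp [Matrix.single, Matrix.of_apply, ite_and, apply_ite (starRingEnd ℂ),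
    Finset.sum_ite_eq, Finset.sum_ite_eq', mul_comm, mul_assoc, mul_left_comm]

lemma tr_std_left (d e : Fin n → ℂ) (Y : Matrix (Fin n) (Fin n) ℂ) (i j : Fin n) :
    (diagonal d * (Matrix.single i j (1:ℂ))ᴴ * (diagonal e * Y)).trace
      = d j * e i * Y i j := by
  rw [tr_helper]
  simp [Matrix.single, Matrix.of_apply, ite_and, apply_ite (starRingEnd ℂ),
    Finset.sum_ite_eq, Finset.sum_ite_eq', mul_comm, mul_assoc, mul_left_comm]

lemma std_conjT (i j : Fin n) : (Matrix.single i j (1:ℂ))ᴴ = Matrix.single j i 1 := by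
  ext a b
  simp [Matrix.single, Matrix.conjTranspose_apply, and_comm]

lemma diag_mul_std_mul_diag (d e : Fin n → ℂ) (i j : Fin n) :
    diagonal d * Matrix.single i j (1:ℂ) * diagonal e = (d i * e j) • Matrix.single i j 1 := by
  ext a b
  by_cases h1 : i = a <;> by_cases h2 : j = b <;>
    simp [Matrix.single, diagonal_mul, mul_diagonal, h1, h2]

lemma real_key {a b s : ℝ} (ha : 0 < a) (hb : 0 < b) (hs : 2*s - 1 ≠ 0)
    (h : a ^ s * b ^ (1-s) = b ^ s * a ^ (1-s)) : a = b := by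
  have h2 : a ^ (2*s-1) = b ^ (2*s-1) := by
    have e1 : a ^ (2*s-1) = a ^ s / a ^ (1-s) := by
      rw [← Real.rpow_sub ha]; ring_nf
    have e2 : b ^ (2*s-1) = b ^ s / b ^ (1-s) := by
      rw [← Real.rpow_sub hb]; ring_nf
    rw [e1, e2, div_eq_div_iff (Real.rpow_pos_of_pos ha _).ne' (Real.rpow_pos_of_pos hb _).ne']
    linarith [h]
  calc a = (a ^ (2*s-1)) ^ (2*s-1)⁻¹ := by
        rw [← Real.rpow_mul ha.le, mul_inv_cancel₀ hs, Real.rpow_one]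
    _ = (b ^ (2*s-1)) ^ (2*s-1)⁻¹ := by rw [h2]
    _ = b := by rw [← Real.rpow_mul hb.le, mul_inv_cancel₀ hs, Real.rpow_one]

lemma key (lam : Fin n → ℝ) (hlam : ∀ i, 0 < lam i) (s : ℝ) (hs : 2*s - 1 ≠ 0)
    (L : Matrix (Fin n) (Fin n) ℂ →ₗ[ℂ] Matrix (Fin n) (Fin n) ℂ)
    (hstar : ∀ A, L Aᴴ = (L A)ᴴ)
    (hsa : ∀ A B : Matrix (Fin n) (Fin n) ℂ,
      (diagonal (fun i => ((lam i ^ s : ℝ) : ℂ)) * (L A)ᴴ *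
          (diagonal (fun i => ((lam i ^ (1-s) : ℝ) : ℂ)) * B)).trace
        = (diagonal (fun i => ((lam i ^ s : ℝ) : ℂ)) * Aᴴ *
          (diagonal (fun i => ((lam i ^ (1-s) : ℝ) : ℂ)) * L B)).trace) :
    ∀ A, L (diagonal (fun i => ((lam i : ℝ) : ℂ)) * A * diagonal (fun i => (((lam i)⁻¹ : ℝ) : ℂ)))
      = diagonal (fun i => ((lam i : ℝ) : ℂ)) * L A * diagonal (fun i => (((lam i)⁻¹ : ℝ) : ℂ)) := by
  set d : Fin n → ℂ := fun i => ((lam i ^ s : ℝ) : ℂ) with hd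
  set e : Fin n → ℂ := fun i => ((lam i ^ (1-s) : ℝ) : ℂ) with he
  -- basic relation from self-adjointness
  have R1 : ∀ i j k l : Fin n,
      d l * e k * (starRingEnd ℂ) ((L (Matrix.single i j 1)) k l)
        = d j * e i * (L (Matrix.single k l 1)) i j := by
    intro i j k l
    have := hsa (Matrix.single i j 1) (Matrix.single k l 1)
    rwa [tr_std_right, tr_std_left] at this
  -- equal eigenvalue products off the kernel
  have stepA : ∀ i j k l : Fin n, (L (Matrix.single i j 1)) k l ≠ 0 →
      lam j * lam k = lam i * lam l := by
    intro i j k l hm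
    set m := (L (Matrix.single i j 1)) k l with hmdef
    set M := (L (Matrix.single k l 1)) i j with hMdef
    have R2 : d l * e k * m = d j * e i * (starRingEnd ℂ) M := by
      have := congrArg (starRingEnd ℂ) (R1 i j k l)
      simpa [hd, he, Complex.conj_ofReal, mul_comm, mul_assoc, mul_left_comm] using this
    have R1' : d k * e l * m = d i * e j * (starRingEnd ℂ) M := by
      have h0 := R1 j i l k
      have hLji : L (Matrix.single j i 1) = (L (Matrix.single i j 1))ᴴ := by
        rw [← std_conjT, hstar]
      have hLlk : L (Matrix.single l k 1) = (L (Matrix.single k l 1))ᴴ := by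
        rw [← std_conjT, hstar]
      rw [hLji, hLlk] at h0
      simpa [Matrix.conjTranspose_apply, ← hmdef, ← hMdef] using h0
    have hcoef : d k * e l * (d j * e i) = d i * e j * (d l * e k) := by
      have hmul : d k * e l * m * (d j * e i) = d i * e j * (d l * e k * m) := by
        rw [R1', R2]; ring
      exact mul_right_cancel₀ hm (by linear_combination hmul)
    -- convert to a real identity
    have hreal : lam k ^ s * lam l ^ (1-s) * (lam j ^ s * lam i ^ (1-s))
        = lam i ^ s * lam j ^ (1-s) * (lam l ^ s * lam k ^ (1-s)) := by
      have := hcoef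
      simp only [hd, he, ← Complex.ofReal_mul] at this
      exact_mod_cast this
    have hcomb : (lam j * lam k) ^ s * (lam i * lam l) ^ (1-s)
        = (lam i * lam l) ^ s * (lam j * lam k) ^ (1-s) := by
      rw [Real.mul_rpow (hlam j).le (hlam k).le, Real.mul_rpow (hlam i).le (hlam l).le,
        Real.mul_rpow (hlam i).le (hlam l).le, Real.mul_rpow (hlam j).le (hlam k).le]
      ring_nf
      ring_nf at hreal
      linarith [hreal]
    exact real_key (mul_pos (hlam j) (hlam k)) (mul_pos (hlam i) (hlam l)) hs hcomb
  -- commuting on basis elements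
  have stepB : ∀ i j : Fin n,
      L (diagonal (fun i => ((lam i : ℝ) : ℂ)) * Matrix.single i j 1
          * diagonal (fun i => (((lam i)⁻¹ : ℝ) : ℂ)))
        = diagonal (fun i => ((lam i : ℝ) : ℂ)) * L (Matrix.single i j 1)
          * diagonal (fun i => (((lam i)⁻¹ : ℝ) : ℂ)) := by
    intro i j
    rw [diag_mul_std_mul_diag, _root_.map_smul]
    ext k l
    rw [Matrix.smul_apply, smul_eq_mul]
    have hrhs : (diagonal (fun i => ((lam i : ℝ) : ℂ)) * L (Matrix.single i j 1)
          * diagonal (fun i => (((lam i)⁻¹ : ℝ) : ℂ))) k l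
        = (lam k : ℂ) * (((lam l)⁻¹ : ℝ) : ℂ) * (L (Matrix.single i j 1)) k l := by
      simp [diagonal_mul, mul_diagonal]; ring
    rw [hrhs]
    by_cases hm : (L (Matrix.single i j 1)) k l = 0
    · simp [hm]
    · have hprod := stepA i j k l hm
      have hC : (lam j : ℂ) * lam k = (lam i : ℂ) * lam l := by exact_mod_cast hprod
      have hj : (lam j : ℂ) ≠ 0 := Complex.ofReal_ne_zero.mpr (hlam j).ne'
      have hl : (lam l : ℂ) ≠ 0 := Complex.ofReal_ne_zero.mpr (hlam l).ne'
      push_cast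
      field_simp
      linear_combination -hC
  -- extend by linearity
  intro A
  conv_lhs => rw [matrix_eq_sum_single A]
  conv_rhs => rw [matrix_eq_sum_single A]
  simp only [Finset.mul_sum, Finset.sum_mul, map_sum]
  refine Finset.sum_congr rfl fun i _ => Finset.sum_congr rfl fun j _ => ?_
  have hstd : Matrix.single i j (A i j) = A i j • Matrix.single i j (1:ℂ) := by
    rw [smul_single, smul_eq_mul, mul_one]
  rw [hstd, mul_smul_comm, smul_mul_assoc, _root_.map_smul, _root_.map_smul,
    mul_smul_comm, smul_mul_assoc, stepB i j]


/-- The real power `σ^s` of a positive definite matrix, via the functional calculus. -/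
noncomputable def mpow {n : ℕ} {σ : Matrix (Fin n) (Fin n) ℂ} (hσ : σ.PosDef) (s : ℝ) :
    Matrix (Fin n) (Fin n) ℂ :=
  hσ.1.cfc fun x => x ^ s

/-- A self-adjointness preserving linear map that is self-adjoint with respect to
`⟨A,B⟩_s = Tr[σ^s A* σ^{1-s} B]` for some `s ∈ [0,1]`, `s ≠ 1/2`, commutes with the
modular operator `Δ_σ(A) = σ A σ⁻¹`. -/
theorem selfAdjoint_s_implies_commutes_modular {n : ℕ}
    (σ : Matrix (Fin n) (Fin n) ℂ) (hσ : σ.PosDef) (hTr : σ.trace = 1)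
    (s : ℝ) (hs0 : 0 ≤ s) (hs1 : s ≤ 1) (hs : s ≠ 1 / 2)
    (K : Matrix (Fin n) (Fin n) ℂ →ₗ[ℂ] Matrix (Fin n) (Fin n) ℂ)
    (hstar : ∀ A, K Aᴴ = (K A)ᴴ)
    (hsa : ∀ A B : Matrix (Fin n) (Fin n) ℂ,
      (mpow hσ s * (K A)ᴴ * (mpow hσ (1 - s) * B)).trace
        = (mpow hσ s * Aᴴ * (mpow hσ (1 - s) * K B)).trace) :
    ∀ A, K (σ * A * σ⁻¹) = σ * K A * σ⁻¹ := by
  have hs' : 2 * s - 1 ≠ 0 := fun h => hs (by linarith)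
  have hH := hσ.1
  set lam := hH.eigenvalues with hlamdef
  have hlam : ∀ i, 0 < lam i := hσ.eigenvalues_pos
  set U : Matrix (Fin n) (Fin n) ℂ :=
    (IsHermitian.eigenvectorUnitary hH : Matrix (Fin n) (Fin n) ℂ) with hUdef
  have hU1 : star U * U = 1 := mem_unitaryGroup_iff'.mp (IsHermitian.eigenvectorUnitary hH).2
  have hU2 : U * star U = 1 := mem_unitaryGroup_iff.mp (IsHermitian.eigenvectorUnitary hH).2
  have tr_conj : ∀ M : Matrix (Fin n) (Fin n) ℂ, (U * M * star U).trace = M.trace := by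
    intro M; rw [Matrix.trace_mul_comm, ← mul_assoc, hU1, one_mul]
  have collapse : ∀ X Y : Matrix (Fin n) (Fin n) ℂ,
      (U * X * star U) * (U * Y * star U) = U * (X * Y) * star U := by
    intro X Y
    simp only [mul_assoc]
    rw [← mul_assoc (star U) U, hU1, one_mul]
  have hsand : ∀ M : Matrix (Fin n) (Fin n) ℂ, U * (star U * M * U) * star U = M := by
    intro M
    have h : U * (star U * M * U) * star U = U * star U * M * (U * star U) := by
      simp only [mul_assoc]
    rw [h, hU2, one_mul, mul_one]
  have hmpow : ∀ t : ℝ,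
      mpow hσ t = U * diagonal (fun i => ((lam i ^ t : ℝ) : ℂ)) * star U := by
    intro t; rfl
  have hsig : σ = U * diagonal (fun i => ((lam i : ℝ) : ℂ)) * star U := by
    conv_lhs => rw [hH.spectral_theorem]
    rfl
  have hDinv : diagonal (fun i => ((lam i : ℝ) : ℂ))
      * diagonal (fun i => (((lam i)⁻¹ : ℝ) : ℂ)) = 1 := by
    rw [diagonal_mul_diagonal]
    have h : (fun i => ((lam i : ℝ) : ℂ) * (((lam i)⁻¹ : ℝ) : ℂ)) = fun _ => (1 : ℂ) := by
      funext i
      push_cast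
      rw [mul_inv_cancel₀ (Complex.ofReal_ne_zero.mpr (hlam i).ne')]
    rw [h, diagonal_one]
  have hsiginv : σ⁻¹ = U * diagonal (fun i => (((lam i)⁻¹ : ℝ) : ℂ)) * star U := by
    apply inv_eq_right_inv
    rw [hsig, collapse, hDinv, mul_one, hU2]
  have hmid : ∀ M : Matrix (Fin n) (Fin n) ℂ,
      U * (diagonal (fun i => ((lam i : ℝ) : ℂ)) * (star U * M * U)
        * diagonal (fun i => (((lam i)⁻¹ : ℝ) : ℂ))) * star U = σ * M * σ⁻¹ := by
    intro M
    rw [hsiginv]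
    conv_rhs => rw [hsig]
    simp only [mul_assoc]
  let L : Matrix (Fin n) (Fin n) ℂ →ₗ[ℂ] Matrix (Fin n) (Fin n) ℂ :=
    { toFun := fun X => star U * K (U * X * star U) * U
      map_add' := fun X Y => by
        simp only [mul_add, add_mul, map_add]
      map_smul' := fun c X => by
        simp only [Matrix.mul_smul, Matrix.smul_mul, LinearMap.map_smul, RingHom.id_apply] }
  have hK : ∀ Z, K (U * Z * star U) = U * L Z * star U := by
    intro Z
    show K (U * Z * star U) = U * (star U * K (U * Z * star U) * U) * star U
    rw [hsand]
  have hstarL : ∀ B, L Bᴴ = (L B)ᴴ := by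
    intro B
    show star U * K (U * Bᴴ * star U) * U = (star U * K (U * B * star U) * U)ᴴ
    have h1 : U * Bᴴ * star U = (U * B * star U)ᴴ := by
      simp [conjTranspose_mul, Matrix.star_eq_conjTranspose, mul_assoc]
    rw [h1, hstar]
    simp [conjTranspose_mul, Matrix.star_eq_conjTranspose, mul_assoc]
  have hsaL : ∀ X Y : Matrix (Fin n) (Fin n) ℂ,
      (diagonal (fun i => ((lam i ^ s : ℝ) : ℂ)) * (L X)ᴴ *
          (diagonal (fun i => ((lam i ^ (1-s) : ℝ) : ℂ)) * Y)).trace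
        = (diagonal (fun i => ((lam i ^ s : ℝ) : ℂ)) * Xᴴ *
          (diagonal (fun i => ((lam i ^ (1-s) : ℝ) : ℂ)) * L Y)).trace := by
    intro X Y
    have h := hsa (U * X * star U) (U * Y * star U)
    rw [hmpow s, hmpow (1-s)] at h
    have hKX : (K (U * X * star U))ᴴ = U * (L X)ᴴ * star U := by
      rw [hK]
      simp [conjTranspose_mul, Matrix.star_eq_conjTranspose, mul_assoc]
    have hXH : (U * X * star U)ᴴ = U * Xᴴ * star U := by
      simp [conjTranspose_mul, Matrix.star_eq_conjTranspose, mul_assoc]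
    rw [hKX, hXH, hK] at h
    simp only [collapse] at h
    simp only [tr_conj] at h
    exact h
  intro A
  have hmain := key lam hlam s hs' L hstarL hsaL (star U * A * U)
  have e1 : L (star U * A * U) = star U * K A * U := by
    show star U * K (U * (star U * A * U) * star U) * U = _
    rw [hsand A]
  have e2 : L (diagonal (fun i => ((lam i : ℝ) : ℂ)) * (star U * A * U)
        * diagonal (fun i => (((lam i)⁻¹ : ℝ) : ℂ)))
      = star U * K (σ * A * σ⁻¹) * U := by
    show star U * K (U * (diagonal (fun i => ((lam i : ℝ) : ℂ)) * (star U * A * U)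
        * diagonal (fun i => (((lam i)⁻¹ : ℝ) : ℂ))) * star U) * U = _
    rw [hmid A]
  rw [e1, e2] at hmain
  have hfin := congrArg (fun M => U * M * star U) hmain
  simpa only [hsand, hmid] using hfin
end

section
/- Let K : M_n(ℂ) → M_n(ℂ) be completely positive with Kraus representation K(A) = Σ_{j=1}^m K_j* A K_j where Σ_j K_j* K_j = I, and suppose σ is a positive definite density matrix with Σ_j K_j σ K_j* = σ. Define K̂_j = σ^{1/2} K_j* σ^{−1/2} and K̂(A) = Σ_j K̂_j* A K̂_j. Then: (i) Σ_j K̂_j* K̂_j = I; (ii) Σ_j K̂_j σ K̂_j* = σ; and (iii) Tr[σ^{1/2} (K̂(B))* σ^{1/2} A] = Tr[σ^{1/2} B* σ^{1/2} K(A)] for all A, B ∈ M_n(ℂ), i.e., K̂ is the adjoint of K with respect to the KMS inner product ⟨A,B⟩_{1/2} = Tr[σ^{1/2} A* σ^{1/2} B]. -/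
open Matrix
open scoped ComplexOrder

/-- The dual Kraus operators `K̂_j = σ^{1/2} K_j* σ^{−1/2}`. -/
noncomputable def dualKraus {n : ℕ} {σ : Matrix (Fin n) (Fin n) ℂ} (hσ : σ.PosDef)
    (Kj : Matrix (Fin n) (Fin n) ℂ) : Matrix (Fin n) (Fin n) ℂ :=
  mpow hσ (1 / 2) * Kjᴴ * mpow hσ (-(1 / 2))

lemma mpow_mul {n : ℕ} {σ : Matrix (Fin n) (Fin n) ℂ} (hσ : σ.PosDef) (s t : ℝ) :
    mpow hσ s * mpow hσ t = mpow hσ (s + t) := by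
  unfold mpow Matrix.IsHermitian.cfc
  simp only [Unitary.conjStarAlgAut_apply, Unitary.coe_star]
  set U := (Matrix.IsHermitian.eigenvectorUnitary hσ.1 : Matrix (Fin n) (Fin n) ℂ) with hUdef
  have hU : star U * U = 1 := (Matrix.mem_unitaryGroup_iff').mp
    (Matrix.IsHermitian.eigenvectorUnitary hσ.1).2
  have cancel : ∀ X : Matrix (Fin n) (Fin n) ℂ, star U * (U * X) = X := fun X => by
    rw [← mul_assoc, hU, one_mul]
  have hd : diagonal ((RCLike.ofReal : ℝ → ℂ) ∘ (fun x : ℝ => x ^ s) ∘ hσ.1.eigenvalues) *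
      diagonal ((RCLike.ofReal : ℝ → ℂ) ∘ (fun x : ℝ => x ^ t) ∘ hσ.1.eigenvalues) =
      diagonal ((RCLike.ofReal : ℝ → ℂ) ∘ (fun x : ℝ => x ^ (s + t)) ∘ hσ.1.eigenvalues) := by
    rw [diagonal_mul_diagonal]
    refine congrArg diagonal (funext fun i => ?_)
    show ((hσ.1.eigenvalues i ^ s : ℝ) : ℂ) * ((hσ.1.eigenvalues i ^ t : ℝ) : ℂ) = _
    rw [← Complex.ofReal_mul, ← Real.rpow_add (hσ.eigenvalues_pos i)]
    rfl
  simp only [mul_assoc]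
  rw [cancel, ← mul_assoc (diagonal _) (diagonal _), hd]

lemma mpow_herm {n : ℕ} {σ : Matrix (Fin n) (Fin n) ℂ} (hσ : σ.PosDef) (s : ℝ) :
    (mpow hσ s)ᴴ = mpow hσ s := by
  unfold mpow Matrix.IsHermitian.cfc
  simp only [Unitary.conjStarAlgAut_apply, Unitary.coe_star]
  have : star ((RCLike.ofReal : ℝ → ℂ) ∘ (fun x : ℝ => x ^ s) ∘ hσ.1.eigenvalues)
      = ((RCLike.ofReal : ℝ → ℂ) ∘ (fun x : ℝ => x ^ s) ∘ hσ.1.eigenvalues : Fin n → ℂ) := by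
    funext i
    simp [Function.comp, Complex.conj_ofReal]
  simp only [conjTranspose_mul, conjTranspose_conjTranspose, star_eq_conjTranspose,
    diagonal_conjTranspose, this, mul_assoc]

lemma mpow_one' {n : ℕ} {σ : Matrix (Fin n) (Fin n) ℂ} (hσ : σ.PosDef) :
    mpow hσ 1 = σ := by
  unfold mpow Matrix.IsHermitian.cfc
  simp only [Real.rpow_one]
  exact hσ.1.spectral_theorem.symm

lemma mpow_zero' {n : ℕ} {σ : Matrix (Fin n) (Fin n) ℂ} (hσ : σ.PosDef) :
    mpow hσ 0 = 1 := by
  unfold mpow Matrix.IsHermitian.cfc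
  simp only [Unitary.conjStarAlgAut_apply, Unitary.coe_star]
  have hU : (Matrix.IsHermitian.eigenvectorUnitary hσ.1 : Matrix (Fin n) (Fin n) ℂ) *
      star (Matrix.IsHermitian.eigenvectorUnitary hσ.1 : Matrix (Fin n) (Fin n) ℂ) = 1 :=
    (Matrix.mem_unitaryGroup_iff).mp (Matrix.IsHermitian.eigenvectorUnitary hσ.1).2
  have : ((RCLike.ofReal : ℝ → ℂ) ∘ (fun x : ℝ => x ^ (0:ℝ)) ∘ hσ.1.eigenvalues) = fun _ => (1:ℂ) := by
    funext i
    simp [Real.rpow_zero]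
  rw [this, show diagonal (fun _ : Fin n => (1:ℂ)) = (1 : Matrix (Fin n) (Fin n) ℂ) from diagonal_one, mul_one]
  exact hU

/-- For a unital completely positive map `K(A) = Σ_j K_j* A K_j` with
`Σ_j K_j* K_j = I` and `Σ_j K_j σ K_j* = σ`, the dual Kraus operators
`K̂_j = σ^{1/2} K_j* σ^{−1/2}` satisfy (i) `Σ_j K̂_j* K̂_j = I`,
(ii) `Σ_j K̂_j σ K̂_j* = σ`, and (iii) the map `K̂(A) = Σ_j K̂_j* A K̂_j` is the adjoint
of `K` with respect to the KMS inner product `⟨A,B⟩_{1/2} = Tr[σ^{1/2} A* σ^{1/2} B]`. -/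
theorem dualKraus_properties {n m : ℕ}
    (σ : Matrix (Fin n) (Fin n) ℂ) (hσ : σ.PosDef) (hTr : σ.trace = 1)
    (K : Fin m → Matrix (Fin n) (Fin n) ℂ)
    (hunital : ∑ j, (K j)ᴴ * K j = 1)
    (hinv : ∑ j, K j * σ * (K j)ᴴ = σ) :
    (∑ j, (dualKraus hσ (K j))ᴴ * dualKraus hσ (K j) = 1) ∧
    (∑ j, dualKraus hσ (K j) * σ * (dualKraus hσ (K j))ᴴ = σ) ∧
    (∀ A B : Matrix (Fin n) (Fin n) ℂ,
      (mpow hσ (1 / 2) * (∑ j, (dualKraus hσ (K j))ᴴ * B * dualKraus hσ (K j))ᴴ *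
        (mpow hσ (1 / 2) * A)).trace
        = (mpow hσ (1 / 2) * Bᴴ *
            (mpow hσ (1 / 2) * ∑ j, (K j)ᴴ * A * K j)).trace) := by
  set S := mpow hσ (1 / 2) with hSdef
  set T := mpow hσ (-(1 / 2)) with hTdef
  have hSS : S * S = σ := by
    rw [hSdef, mpow_mul]; norm_num; exact mpow_one' hσ
  have hST : S * T = 1 := by
    rw [hSdef, hTdef, mpow_mul]; norm_num; exact mpow_zero' hσ
  have hTS : T * S = 1 := by
    rw [hSdef, hTdef, mpow_mul]; norm_num; exact mpow_zero' hσ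
  have hSh : Sᴴ = S := mpow_herm hσ _
  have hTh : Tᴴ = T := mpow_herm hσ _
  have cST : ∀ X : Matrix (Fin n) (Fin n) ℂ, S * (T * X) = X := fun X => by
    rw [← mul_assoc, hST, one_mul]
  have cTS : ∀ X : Matrix (Fin n) (Fin n) ℂ, T * (S * X) = X := fun X => by
    rw [← mul_assoc, hTS, one_mul]
  refine ⟨?_, ?_, ?_⟩
  · have h1 : ∀ j, (dualKraus hσ (K j))ᴴ * dualKraus hσ (K j)
        = T * (K j * σ * (K j)ᴴ) * T := by
      intro j
      simp only [dualKraus, conjTranspose_mul, conjTranspose_conjTranspose, hSh, hTh,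
        ← hSdef, ← hTdef, ← hSS, mul_assoc]
    simp only [h1]
    rw [← Finset.sum_mul, ← Finset.mul_sum, hinv, ← hSS]
    simp only [mul_assoc]
    rw [hST, mul_one, hTS]
  · have h2 : ∀ j, dualKraus hσ (K j) * σ * (dualKraus hσ (K j))ᴴ
        = S * ((K j)ᴴ * K j) * S := by
      intro j
      simp only [dualKraus, conjTranspose_mul, conjTranspose_conjTranspose, hSh, hTh,
        ← hSdef, ← hTdef, ← hSS, mul_assoc]
      rw [cTS, cST]
    simp only [h2]
    rw [← Finset.sum_mul, ← Finset.mul_sum, hunital, mul_one, hSS]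
  · intro A B
    rw [conjTranspose_sum]
    have h3 : ∀ j ∈ Finset.univ, ((dualKraus hσ (K j))ᴴ * B * dualKraus hσ (K j))ᴴ
        = (dualKraus hσ (K j))ᴴ * Bᴴ * dualKraus hσ (K j) := fun j _ => by
      simp only [conjTranspose_mul, conjTranspose_conjTranspose, mul_assoc]
    rw [Finset.sum_congr rfl h3, Finset.mul_sum, Finset.sum_mul, trace_sum,
      Finset.mul_sum, Finset.mul_sum, trace_sum]
    refine Finset.sum_congr rfl fun j _ => ?_
    simp only [dualKraus, conjTranspose_mul, conjTranspose_conjTranspose, hSh, hTh, ← hSdef, ← hTdef, mul_assoc]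
    rw [cST, cTS, trace_mul_comm]
    simp only [mul_assoc]
end
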